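/- The map f_AM restricts to a bijection from self-modified ascent sequences of length n onto Fishburn matrices with entry sum n all of whose diagonal entries are positive. -/

import Mathlib

def ascents (l : List ℕ) : ℕ :=
  ((l.zip l.tail).filter (fun p => p.1 < p.2)).length

def IsAscSeq (l : List ℕ) : Prop :=
  l.getD 0 0 = 0 ∧
  ∀ k, k < l.length → 0 < k → l.getD k 0 ≤ ascents (l.take k) + 1

def IsRGF (l : List ℕ) : Prop :=
  l.getD 0 0 = 0 ∧
  ∀ k, k < l.length → ∀ j, l.getD k 0 = j + 1 → ∃ i, i < k ∧ l.getD i 0 = j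

def SelfModified (l : List ℕ) : Prop :=
  IsAscSeq l ∧
  ∀ k, k < l.length → 0 < k →
    l.getD k 0 ≤ l.getD (k - 1) 0 ∨ l.getD k 0 = ascents (l.take k) + 1

def Contains101 (l : List ℕ) : Prop :=
  ∃ i j k, i < j ∧ j < k ∧ k < l.length ∧
    l.getD i 0 = l.getD k 0 ∧ l.getD j 0 < l.getD k 0

def Contains0101 (l : List ℕ) : Prop :=
  ∃ i j k m, i < j ∧ j < k ∧ k < m ∧ m < l.length ∧
    l.getD i 0 = l.getD k 0 ∧ l.getD j 0 = l.getD m 0 ∧ l.getD i 0 < l.getD j 0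

def Contains1010 (l : List ℕ) : Prop :=
  ∃ i j k m, i < j ∧ j < k ∧ k < m ∧ m < l.length ∧
    l.getD i 0 = l.getD k 0 ∧ l.getD j 0 = l.getD m 0 ∧ l.getD j 0 < l.getD i 0

/-- The view of position `i` in the sequence `a`: the number of indices `j > i` such
that `a j` strictly exceeds all entries `a k` for `i ≤ k < j`.  This agrees with the
recursive definition `v i = v j + 1` for `j` the least index `> i` with `a j > a i`. -/
def view {α : Type*} [LinearOrder α] [Inhabited α] (a : List α) (i : ℕ) : ℕ :=
  ((List.range a.length).filter (fun j =>
    decide (i < j ∧ ∀ k, k < j → i ≤ k → a.getD k default < a.getD j default))).length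

/-- The panorama of `a`: the views of the positions of `a`, listed grouped by entry
value from largest value to smallest, positions within a group in increasing order. -/
def pan {α : Type*} [LinearOrder α] [Inhabited α] (a : List α) : List ℕ :=
  ((List.range a.length).mergeSort (fun i j =>
    decide (a.getD j default < a.getD i default ∨
      (a.getD i default = a.getD j default ∧ i ≤ j)))).map (view a)

/-- A square matrix of natural numbers, given by a dimension and an entry function
(indices are 0-based; entries with an index `≥ d` are irrelevant/zero). -/
structure FMat where
  d : ℕ
  entry : ℕ → ℕ → ℕ

/-- 0-based index of the first row whose rightmost entry is nonzero. -/
noncomputable def mindex (M : FMat) : ℕ :=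
  sInf {i | M.entry i (M.d - 1) ≠ 0}

/-- One step of the recursive bijection from ascent sequences to Fishburn matrices,
with cases AM1, AM2, AM3 (0-based indices). -/
noncomputable def fStep (M : FMat) (a : ℕ) : FMat :=
  if a ≤ mindex M then
    -- AM1: increase entry (a, d-1)
    ⟨M.d, fun i j => M.entry i j + if i = a ∧ j = M.d - 1 then 1 else 0⟩
  else if a = M.d then
    -- AM2: append a new row and column, with 1 in the new diagonal entry
    ⟨M.d + 1, fun i j =>
      if i = M.d ∨ j = M.d then (if i = M.d ∧ j = M.d then 1 else 0)
      else M.entry i j⟩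
  else
    -- AM3: insert a new row and column at index a
    ⟨M.d + 1, fun i j =>
      if i = a then (if j = M.d then 1 else 0)
      else if j = a then (if i < a then M.entry i (M.d - 1) else 0)
      else if j = M.d ∧ i < a then 0
      else M.entry (if i < a then i else i - 1) (if j < a then j else j - 1)⟩

/-- The map from ascent sequences to Fishburn matrices. -/
noncomputable def fAM (l : List ℕ) : FMat :=
  l.tail.foldl fStep ⟨1, fun i j => if i = 0 ∧ j = 0 then 1 else 0⟩

/-- Fishburn matrix: upper triangular (and supported on `[0,d) × [0,d)`),
with no zero row and no zero column. -/
def IsFishburn (M : FMat) : Prop :=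
  (∀ i j, (M.d ≤ i ∨ M.d ≤ j ∨ j < i) → M.entry i j = 0) ∧
  (∀ i, i < M.d → ∃ j, j < M.d ∧ M.entry i j ≠ 0) ∧
  (∀ j, j < M.d → ∃ i, i < M.d ∧ M.entry i j ≠ 0)

def entrySum (M : FMat) : ℕ :=
  ∑ i ∈ Finset.range M.d, ∑ j ∈ Finset.range M.d, M.entry i j

/-- Reflection of a matrix through its antidiagonal. -/
def reflect (M : FMat) : FMat :=
  ⟨M.d, fun i j => if i < M.d ∧ j < M.d then M.entry (M.d - 1 - j) (M.d - 1 - i) else 0⟩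

/-- The canonical sequence `(0^{m₀₀}, 1^{m₁₁}, 0^{m₀₁}, 2^{m₂₂}, 1^{m₁₂}, 0^{m₀₂}, …)`
(0-based indices) associated to a matrix; this is `f_MA(M)` for `M ∈ RMatrices`. -/
def canonSeq (M : FMat) : List ℕ :=
  (List.range M.d).flatMap (fun j =>
    (List.range (j + 1)).reverse.flatMap (fun i => List.replicate (M.entry i j) i))

/-- The dual canonical sequence
`(0^{m_{d-1,d-1}}, 1^{m_{d-2,d-2}}, 0^{m_{d-2,d-1}}, …, (d-1)^{m_{0,0}}, …, 0^{m_{0,d-1}})`,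
i.e. `f_MA` applied to the antidiagonal reflection of `M`. -/
def dualCanonSeq (M : FMat) : List ℕ :=
  (List.range M.d).flatMap (fun j =>
    (List.range (j + 1)).reverse.flatMap (fun i =>
      List.replicate (M.entry (M.d - 1 - j) (M.d - 1 - i)) i))

/-- A matrix is SE-free if it has no pair of nonzero entries `m i j`, `m i' j'`
with `i < i'`, `j < j'` and `i' ≤ j`. -/
def SEFree (M : FMat) : Prop :=
  ¬ ∃ i j i' j', i < i' ∧ j < j' ∧ i' ≤ j ∧ j' < M.d ∧
    M.entry i j ≠ 0 ∧ M.entry i' j' ≠ 0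

/-- Generalized ballot sequence (Yamanouchi word): in every prefix, each value `j+1`
occurs at most as often as `j`. -/
def IsBallot (l : List ℕ) : Prop :=
  ∀ k j, (l.take k).count (j + 1) ≤ (l.take k).count j

lemma zip_tail_append (l : List ℕ) (a : ℕ) (h : l ≠ []) :
    (l ++ [a]).zip (l ++ [a]).tail = l.zip l.tail ++ [(l.getLast h, a)] := by
  induction l with
  | nil => simp at h
  | cons x xs ih =>
    cases xs with
    | nil => simp
    | cons y ys =>
      simp only [List.cons_append, List.zip_cons_cons, List.tail_cons] at *
      rw [ih (by simp)]
      simp [List.getLast]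

lemma ascents_append (l : List ℕ) (a : ℕ) (h : l ≠ []) :
    ascents (l ++ [a]) = ascents l + if l.getLast h < a then 1 else 0 := by
  unfold ascents
  rw [zip_tail_append l a h, List.filter_append]
  by_cases hc : l.getLast h < a <;> simp [hc]

lemma zipTail_take (l : List ℕ) (k : ℕ) :
    ((l.take k).zip (l.take k).tail) = (l.zip l.tail).take (k-1) := by
  induction l generalizing k with
  | nil => simp
  | cons x xs ih =>
    cases k with
    | zero => simp
    | succ k =>
      cases xs with
      | nil => simp
      | cons y ys =>
        cases k with
        | zero => simp
        | succ k =>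
          rw [show k+1+1 = (k+1)+1 from rfl, List.take_succ_cons, List.take_succ_cons]
          simp only [List.zip_cons_cons, List.tail_cons]
          have h2 := ih (k+1)
          simp only [List.take_succ_cons, List.tail_cons, Nat.add_sub_cancel] at h2
          rw [show k+1+1-1 = k+1 from rfl, List.take_succ_cons, ← h2]

lemma ascents_take_le (l : List ℕ) (k : ℕ) : ascents (l.take k) ≤ ascents l := by
  unfold ascents
  rw [zipTail_take]
  exact List.Sublist.length_le (List.Sublist.filter _ (List.take_sublist _ _))

lemma getLast_eq_getD (l : List ℕ) (h : l ≠ []) : l.getLast h = l.getD (l.length - 1) 0 := by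
  have hl : 0 < l.length := List.length_pos_iff.mpr h
  rw [List.getLast_eq_getElem, List.getD_eq_getElem l 0 (by omega : l.length - 1 < l.length)]

lemma selfModified_append_iff (l : List ℕ) (a : ℕ) (h : l ≠ []) :
    SelfModified (l ++ [a]) ↔ SelfModified l ∧ (a ≤ l.getLast h ∨ a = ascents l + 1) := by
  have hl : 0 < l.length := List.length_pos_iff.mpr h
  have hgd : ∀ k, k < l.length → (l ++ [a]).getD k 0 = l.getD k 0 :=
    fun k hk => List.getD_append l [a] 0 k hk
  have hga : (l ++ [a]).getD l.length 0 = a := by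
    rw [List.getD_append_right l [a] 0 l.length le_rfl]; simp
  have htk : ∀ k, k ≤ l.length → (l ++ [a]).take k = l.take k :=
    fun k hk => List.take_append_of_le_length hk
  have hlen : (l ++ [a]).length = l.length + 1 := by simp
  have hlast : l.getLast h = l.getD (l.length - 1) 0 := getLast_eq_getD l h
  constructor
  · rintro ⟨⟨h0, hasc⟩, hsm⟩
    have hsm_n := hsm l.length (by omega) hl
    rw [hga, hgd _ (by omega), htk _ le_rfl, List.take_length] at hsm_n
    refine ⟨⟨⟨?_, ?_⟩, ?_⟩, ?_⟩
    · rw [← hgd 0 hl]; exact h0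
    · intro k hk hk0
      have := hasc k (by omega) hk0
      rwa [hgd k hk, htk k (le_of_lt hk)] at this
    · intro k hk hk0
      have := hsm k (by omega) hk0
      rwa [hgd k hk, hgd (k-1) (by omega), htk k (le_of_lt hk)] at this
    · rw [hlast]; exact hsm_n
  · rintro ⟨⟨⟨h0, hasc⟩, hsm⟩, hcond⟩
    have hbound : a ≤ ascents l + 1 := by
      rcases hcond with hc | hc
      · rw [hlast] at hc
        rcases Nat.eq_or_lt_of_le hl with h1 | h1
        · have : l.getD (l.length - 1) 0 = 0 := by rw [show l.length - 1 = 0 by omega]; exact h0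
          omega
        · have := hasc (l.length - 1) (by omega) (by omega)
          have h2 := ascents_take_le l (l.length - 1)
          omega
      · omega
    refine ⟨⟨?_, ?_⟩, ?_⟩
    · rw [hgd 0 hl]; exact h0
    · intro k hk hk0
      rw [hlen] at hk
      rcases Nat.lt_or_ge k l.length with hk' | hk'
      · rw [hgd k hk', htk k (le_of_lt hk')]; exact hasc k hk' hk0
      · have hk'' : k = l.length := by omega
        subst hk''
        rw [hga, htk _ le_rfl, List.take_length]; exact hbound
    · intro k hk hk0
      rw [hlen] at hk
      rcases Nat.lt_or_ge k l.length with hk' | hk'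
      · rw [hgd k hk', hgd (k-1) (by omega), htk k (le_of_lt hk')]; exact hsm k hk' hk0
      · have hk'' : k = l.length := by omega
        subst hk''
        rw [hga, hgd (l.length - 1) (by omega), htk _ le_rfl, List.take_length, ← hlast]
        exact hcond

lemma mindex_le (M : FMat) (i : ℕ) (hi : M.entry i (M.d - 1) ≠ 0) : mindex M ≤ i :=
  Nat.sInf_le hi

lemma mindex_eq (M : FMat) (m : ℕ) (hm : M.entry m (M.d - 1) ≠ 0)
    (hz : ∀ i, i < m → M.entry i (M.d - 1) = 0) : mindex M = m := by
  refine le_antisymm (Nat.sInf_le hm) ?_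
  by_contra hlt
  push_neg at hlt
  have hne : Set.Nonempty {i | M.entry i (M.d - 1) ≠ 0} := ⟨m, hm⟩
  exact (Nat.sInf_mem hne) (hz _ hlt)

lemma flatMap_replicate_zero (f : ℕ → ℕ) (n : ℕ) (hz : ∀ i, i < n → f i = 0) :
    (List.range n).reverse.flatMap (fun i => List.replicate (f i) i) = [] := by
  rw [List.flatMap_eq_nil_iff]
  intro x hx
  simp only [List.mem_reverse, List.mem_range] at hx
  rw [hz x hx, List.replicate_zero]

lemma flatMap_replicate_bump (f g : ℕ → ℕ) (a n : ℕ) (ha : a < n)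
    (hg : ∀ i, g i = f i + if i = a then 1 else 0) (hzero : ∀ i, i < a → f i = 0) :
    (List.range n).reverse.flatMap (fun i => List.replicate (g i) i)
      = (List.range n).reverse.flatMap (fun i => List.replicate (f i) i) ++ [a] := by
  induction n with
  | zero => omega
  | succ n ih =>
    rw [List.range_succ]
    simp only [List.reverse_append, List.reverse_singleton, List.singleton_append,
      List.flatMap_cons]
    rcases Nat.lt_or_ge a n with h1 | h1
    · rw [ih h1, hg n, if_neg (by omega)]
      simp [List.append_assoc]
    · have han : a = n := by omega
      subst han
      rw [flatMap_replicate_zero f a hzero,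
        flatMap_replicate_zero g a (fun i hi => by rw [hg i, if_neg (by omega), hzero i hi]),
        hg a, if_pos rfl, List.replicate_succ']
      simp

lemma length_canonSeq (M : FMat)
    (htri : ∀ i j, (M.d ≤ i ∨ M.d ≤ j ∨ j < i) → M.entry i j = 0) :
    (canonSeq M).length = entrySum M := by
  unfold canonSeq entrySum
  rw [List.length_flatMap]
  have h1 : ∀ j : ℕ, (List.length ∘ fun j =>
      (List.range (j + 1)).reverse.flatMap (fun i => List.replicate (M.entry i j) i)) j
      = ∑ i ∈ Finset.range (j + 1), M.entry i j := by
    intro j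
    simp only [Function.comp_apply, List.length_flatMap]
    rw [show (List.map (fun a => (List.replicate (M.entry a j) a).length)
        (List.range (j+1)).reverse).sum
      = (List.map (fun i => M.entry i j) (List.range (j+1)).reverse).sum by
        congr 1; apply List.map_congr_left; intro i _; simp]
    rw [List.map_reverse, List.sum_reverse]
    rfl
  rw [List.map_congr_left (f := fun a => (List.flatMap (fun i => List.replicate (M.entry i a) i)
    (List.range (a + 1)).reverse).length) (fun j _ => h1 j)]
  rw [show ((List.range M.d).map fun j => ∑ i ∈ Finset.range (j+1), M.entry i j).sum
    = ∑ j ∈ Finset.range M.d, ∑ i ∈ Finset.range (j+1), M.entry i j from rfl]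
  rw [Finset.sum_comm]
  apply Finset.sum_congr rfl
  intro j hj
  simp only [Finset.mem_range] at hj
  apply Finset.sum_subset
  · intro i hi; simp only [Finset.mem_range] at *; omega
  · intro i hi hni
    simp only [Finset.mem_range] at *
    exact htri i j (by omega)

lemma flatMap_congr' {α β : Type} (l : List α) (f g : α → List β) (h : ∀ x ∈ l, f x = g x) :
    l.flatMap f = l.flatMap g := by
  induction l with
  | nil => rfl
  | cons x xs ih =>
    simp only [List.flatMap_cons]
    rw [h x (by simp), ih (fun y hy => h y (by simp [hy]))]

def lastD (l : List ℕ) : ℕ := l.getD (l.length - 1) 0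

def SMInv (l : List ℕ) (M : FMat) : Prop :=
  M.d = ascents l + 1 ∧
  (∀ i j, (M.d ≤ i ∨ M.d ≤ j ∨ j < i) → M.entry i j = 0) ∧
  (∀ i, i < M.d → 0 < M.entry i i) ∧
  lastD l < M.d ∧
  M.entry (lastD l) (M.d - 1) ≠ 0 ∧
  (∀ i, i < lastD l → M.entry i (M.d - 1) = 0) ∧
  canonSeq M = l

lemma fAM_append (l : List ℕ) (a : ℕ) (h : l ≠ []) :
    fAM (l ++ [a]) = fStep (fAM l) a := by
  unfold fAM
  rw [show (l ++ [a]).tail = l.tail ++ [a] by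
    cases l with | nil => simp at h | cons x xs => simp]
  rw [List.foldl_append]
  rfl

lemma lastD_append (l : List ℕ) (a : ℕ) : lastD (l ++ [a]) = a := by
  unfold lastD
  rw [List.length_append]
  simp only [List.length_singleton]
  rw [List.getD_append_right l [a] 0 _ (by omega)]
  simp

lemma ascents_singleton (a : ℕ) : ascents [a] = 0 := by simp [ascents]

lemma fAM_singleton (a : ℕ) : fAM [a] = ⟨1, fun i j => if i = 0 ∧ j = 0 then 1 else 0⟩ := rfl

lemma inv_singleton : SMInv [0] (fAM [0]) := by
  rw [fAM_singleton]
  refine ⟨by simp [ascents_singleton], ?_, ?_, ?_, ?_, ?_, ?_⟩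
  · intro i j hij
    show (if i = 0 ∧ j = 0 then 1 else 0) = 0
    by_cases hc : i = 0 ∧ j = 0
    · exfalso; obtain ⟨rfl, rfl⟩ := hc; simp at hij
    · simp [hc]
  · intro i hi
    interval_cases i
    simp
  · simp [lastD]
  · simp [lastD]
  · simp [lastD]
  · show ((List.range 1).flatMap fun j =>
        (List.range (j + 1)).reverse.flatMap fun i =>
          List.replicate (if i = 0 ∧ j = 0 then 1 else 0) i) = [0]
    rw [show List.range 1 = [0] from rfl]
    simp

lemma lastD_eq_getLast (l : List ℕ) (h : l ≠ []) : l.getLast h = lastD l :=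
  getLast_eq_getD l h

lemma inv_step_AM1 (l : List ℕ) (a : ℕ) (hl : l ≠ []) (hInv : SMInv l (fAM l))
    (ha : a ≤ lastD l) : SMInv (l ++ [a]) (fAM (l ++ [a])) := by
  rw [fAM_append l a hl]
  unfold SMInv at hInv
  generalize fAM l = M at hInv ⊢
  obtain ⟨hd, htri, hdiag, hlt, hne, hbelow, hcs⟩ := hInv
  have hmin : mindex M = lastD l := mindex_eq M _ hne hbelow
  have hd1 : 0 < M.d := by omega
  unfold fStep
  rw [if_pos (by rw [hmin]; exact ha)]
  have hEa : ∀ i, (fun i j => M.entry i j + if i = a ∧ j = M.d - 1 then 1 else 0) i (M.d - 1)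
      = M.entry i (M.d - 1) + if i = a then 1 else 0 := by
    intro i; by_cases h : i = a <;> simp [h]
  refine ⟨?_, ?_, ?_, ?_, ?_, ?_, ?_⟩
  · show M.d = ascents (l ++ [a]) + 1
    rw [ascents_append l a hl, lastD_eq_getLast l hl, if_neg (by omega)]
    omega
  · intro i j hij
    simp only at hij ⊢
    by_cases hc : i = a ∧ j = M.d - 1
    · exfalso; obtain ⟨rfl, rfl⟩ := hc; omega
    · rw [htri i j hij, if_neg hc]
  · intro i hi
    simp only at hi ⊢
    exact lt_of_lt_of_le (hdiag i hi) (Nat.le_add_right _ _)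
  · rw [lastD_append]; show a < M.d; omega
  · rw [lastD_append]
    show M.entry a (M.d - 1) + (if a = a ∧ M.d - 1 = M.d - 1 then 1 else 0) ≠ 0
    simp
  · intro i hi
    rw [lastD_append] at hi
    show M.entry i (M.d - 1) + (if i = a ∧ M.d - 1 = M.d - 1 then 1 else 0) = 0
    rw [hbelow i (by omega), if_neg (by rintro ⟨rfl, -⟩; omega)]
  · show canonSeq ⟨M.d, _⟩ = l ++ [a]
    unfold canonSeq
    simp only
    have hrange : List.range M.d = List.range (M.d - 1) ++ [M.d - 1] := by
      conv_lhs => rw [show M.d = (M.d - 1) + 1 by omega]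
      rw [List.range_succ]
    have hcs' := hcs
    unfold canonSeq at hcs'
    rw [hrange, List.flatMap_append] at hcs' ⊢
    rw [flatMap_congr' _ _
      (fun j => (List.range (j + 1)).reverse.flatMap fun i => List.replicate (M.entry i j) i)
      (by
        intro j hj
        simp only [List.mem_range] at hj
        apply flatMap_congr'
        intro i _
        rw [if_neg (by rintro ⟨-, rfl⟩; omega), Nat.add_zero])]
    rw [show ([M.d - 1].flatMap fun j => (List.range (j + 1)).reverse.flatMap
          fun i => List.replicate (M.entry i j + if i = a ∧ j = M.d - 1 then 1 else 0) i)
        = ((List.range (M.d - 1 + 1)).reverse.flatMap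
          fun i => List.replicate (M.entry i (M.d - 1) + if i = a ∧ M.d - 1 = M.d - 1 then 1 else 0) i) ++ [] from by simp]
    rw [List.append_nil]
    rw [flatMap_replicate_bump (fun i => M.entry i (M.d - 1))
      (fun i => M.entry i (M.d - 1) + if i = a ∧ M.d - 1 = M.d - 1 then 1 else 0) a (M.d - 1 + 1)
      (by omega)
      (fun i => by by_cases h : i = a <;> simp [h])
      (fun i hi => hbelow i (by omega))]
    rw [← List.append_assoc]
    congr 1
    simpa using hcs'

lemma inv_step_AM2 (l : List ℕ) (a : ℕ) (hl : l ≠ []) (hInv : SMInv l (fAM l))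
    (ha : a = ascents l + 1) (hgt : lastD l < a) :
    SMInv (l ++ [a]) (fAM (l ++ [a])) := by
  rw [fAM_append l a hl]
  unfold SMInv at hInv
  generalize fAM l = M at hInv ⊢
  obtain ⟨hd, htri, hdiag, hlt, hne, hbelow, hcs⟩ := hInv
  have hmin : mindex M = lastD l := mindex_eq M _ hne hbelow
  have had : a = M.d := by omega
  unfold fStep
  rw [if_neg (by omega), if_pos had]
  refine ⟨?_, ?_, ?_, ?_, ?_, ?_, ?_⟩
  · show M.d + 1 = ascents (l ++ [a]) + 1
    rw [ascents_append l a hl, lastD_eq_getLast l hl, if_pos (by omega)]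
    omega
  · intro i j hij
    simp only at hij ⊢
    by_cases h1 : i = M.d ∨ j = M.d
    · rw [if_pos h1, if_neg (by rintro ⟨rfl, rfl⟩; omega)]
    · push_neg at h1
      rw [if_neg (by tauto)]
      exact htri i j (by omega)
  · intro i hi
    simp only at hi ⊢
    by_cases h1 : i = M.d
    · simp [h1]
    · rw [if_neg (by tauto)]
      exact hdiag i (by omega)
  · rw [lastD_append]; show a < M.d + 1; omega
  · rw [lastD_append]
    show (if a = M.d ∨ M.d + 1 - 1 = M.d then
        (if a = M.d ∧ M.d + 1 - 1 = M.d then 1 else 0) else M.entry a (M.d + 1 - 1)) ≠ 0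
    rw [if_pos (by omega), if_pos (by omega)]
    omega
  · intro i hi
    rw [lastD_append] at hi
    show (if i = M.d ∨ M.d + 1 - 1 = M.d then
        (if i = M.d ∧ M.d + 1 - 1 = M.d then 1 else 0) else M.entry i (M.d + 1 - 1)) = 0
    rw [if_pos (by omega), if_neg (by rintro ⟨rfl, -⟩; omega)]
  · show canonSeq ⟨M.d + 1, _⟩ = l ++ [a]
    unfold canonSeq
    simp only
    rw [List.range_succ, List.flatMap_append]
    rw [flatMap_congr' _ _
      (fun j => (List.range (j + 1)).reverse.flatMap fun i => List.replicate (M.entry i j) i)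
      (by
        intro j hj
        simp only [List.mem_range] at hj
        apply flatMap_congr'
        intro i hi
        simp only [List.mem_reverse, List.mem_range] at hi
        rw [if_neg (by omega)])]
    have hlastcol : ((List.range (M.d + 1)).reverse.flatMap fun i =>
        List.replicate (if i = M.d ∨ M.d = M.d then (if i = M.d ∧ M.d = M.d then 1 else 0)
          else M.entry i M.d) i) = [M.d] := by
      rw [flatMap_replicate_bump (fun _ => 0)
        (fun i => if i = M.d ∨ M.d = M.d then (if i = M.d ∧ M.d = M.d then 1 else 0)
          else M.entry i M.d) M.d (M.d + 1) (by omega)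
        (fun i => by by_cases h : i = M.d <;> simp [h])
        (fun i _ => rfl)]
      rw [flatMap_replicate_zero _ _ (fun i _ => rfl)]
      rfl
    rw [show ([M.d].flatMap fun j => (List.range (j + 1)).reverse.flatMap fun i =>
        List.replicate (if i = M.d ∨ j = M.d then (if i = M.d ∧ j = M.d then 1 else 0)
          else M.entry i j) i)
      = ((List.range (M.d + 1)).reverse.flatMap fun i =>
        List.replicate (if i = M.d ∨ M.d = M.d then (if i = M.d ∧ M.d = M.d then 1 else 0)
          else M.entry i M.d) i) ++ [] from by simp]
    rw [List.append_nil, hlastcol]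
    unfold canonSeq at hcs
    rw [hcs, had]

lemma main_inv (l : List ℕ) (h : SelfModified l) (hl : l ≠ []) : SMInv l (fAM l) := by
  induction l using List.reverseRecOn with
  | nil => exact absurd rfl hl
  | append_singleton p a ih =>
    by_cases hp : p = []
    · subst hp
      have ha : a = 0 := by simpa using h.1.1
      subst ha
      exact inv_singleton
    · rw [selfModified_append_iff p a hp] at h
      obtain ⟨hsm, hcond⟩ := h
      have hI := ih hsm hp
      rw [lastD_eq_getLast p hp] at hcond
      rcases hcond with hc | hc
      · exact inv_step_AM1 p a hp hI hc
      · by_cases hle : a ≤ lastD p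
        · exact inv_step_AM1 p a hp hI hle
        · exact inv_step_AM2 p a hp hI hc (by omega)

lemma forward_dir (l : List ℕ) (h : SelfModified l) (hl : l ≠ []) :
    IsFishburn (fAM l) ∧ entrySum (fAM l) = l.length ∧
      (∀ i, i < (fAM l).d → 0 < (fAM l).entry i i) ∧ canonSeq (fAM l) = l := by
  obtain ⟨hd, htri, hdiag, hlt, hne, hbelow, hcs⟩ := main_inv l h hl
  refine ⟨⟨htri, ?_, ?_⟩, ?_, hdiag, hcs⟩
  · intro i hi; exact ⟨i, hi, (hdiag i hi).ne'⟩
  · intro j hj; exact ⟨j, hj, (hdiag j hj).ne'⟩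
  · rw [← length_canonSeq (fAM l) htri, hcs]

lemma entrySum_pos_d (M : FMat) (h : 0 < entrySum M) : 0 < M.d := by
  by_contra h0
  push_neg at h0
  have hd : M.d = 0 := by omega
  unfold entrySum at h
  rw [hd] at h
  simp at h

lemma d_le_entrySum (M : FMat) (hdiag : ∀ i, i < M.d → 0 < M.entry i i) :
    M.d ≤ entrySum M := by
  calc M.d = ∑ i ∈ Finset.range M.d, 1 := by simp
  _ ≤ ∑ i ∈ Finset.range M.d, M.entry i i :=
      Finset.sum_le_sum (fun i hi => hdiag i (Finset.mem_range.mp hi))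
  _ ≤ entrySum M :=
      Finset.sum_le_sum (fun i hi => Finset.single_le_sum (fun j _ => Nat.zero_le _) hi)

lemma surj_base (M : FMat) (htri : ∀ i j, (M.d ≤ i ∨ M.d ≤ j ∨ j < i) → M.entry i j = 0)
    (hsum : entrySum M = 1)
    (hdiag : ∀ i, i < M.d → 0 < M.entry i i) : fAM [0] = M := by
  have hd0 : 0 < M.d := entrySum_pos_d M (by omega)
  have hd1 : M.d = 1 := by have := d_le_entrySum M hdiag; omega
  have h00 : M.entry 0 0 = 1 := by
    unfold entrySum at hsum; rw [hd1] at hsum; simpa using hsum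
  rw [fAM_singleton, show M = ⟨M.d, M.entry⟩ from rfl, FMat.mk.injEq]
  refine ⟨by omega, ?_⟩
  funext i j
  by_cases hc : i = 0 ∧ j = 0
  · obtain ⟨rfl, rfl⟩ := hc; simp [h00]
  · rw [if_neg hc, htri i j (by omega)]

lemma FMat_ext (M N : FMat) (hd : M.d = N.d) (he : ∀ i j, M.entry i j = N.entry i j) :
    M = N := by
  obtain ⟨d1, e1⟩ := M
  obtain ⟨d2, e2⟩ := N
  simp only at hd he
  subst hd
  congr 1
  funext i j
  exact he i j

lemma step_dec (M : FMat) (m : ℕ)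
    (hm_mem : M.entry m (M.d - 1) ≠ 0)
    (hmono : ∀ i, M.entry i (M.d - 1) ≠ 0 → m ≤ i)
    (hne : ∃ i, M.entry i (M.d - 1) - (if i = m then 1 else 0) ≠ 0) :
    fStep ⟨M.d, fun i j => M.entry i j - if i = m ∧ j = M.d - 1 then 1 else 0⟩ m = M := by
  have hmindex : mindex ⟨M.d, fun i j => M.entry i j - if i = m ∧ j = M.d - 1 then 1 else 0⟩
      = sInf {i | M.entry i (M.d - 1) - (if i = m then 1 else 0) ≠ 0} := by
    unfold mindex
    congr 1
    ext i
    show (M.entry i (M.d - 1) - if i = m ∧ M.d - 1 = M.d - 1 then 1 else 0) ≠ 0 ↔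
      (M.entry i (M.d - 1) - if i = m then 1 else 0) ≠ 0
    simp only [eq_self_iff_true, and_true]
  have hcond : m ≤ mindex ⟨M.d, fun i j => M.entry i j - if i = m ∧ j = M.d - 1 then 1 else 0⟩ := by
    rw [hmindex]
    obtain ⟨i0, hi0⟩ := hne
    have hS : {i | M.entry i (M.d - 1) - (if i = m then 1 else 0) ≠ 0}.Nonempty := ⟨i0, hi0⟩
    have hmem := Nat.sInf_mem hS
    simp only [Set.mem_setOf_eq] at hmem
    refine hmono _ (fun hzero => hmem ?_)
    rw [hzero]
    simp
  unfold fStep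
  rw [if_pos hcond]
  show (⟨M.d, fun i j => (M.entry i j - if i = m ∧ j = M.d - 1 then 1 else 0)
      + if i = m ∧ j = M.d - 1 then 1 else 0⟩ : FMat) = M
  refine FMat_ext _ _ rfl ?_
  intro i j
  show (M.entry i j - if i = m ∧ j = M.d - 1 then 1 else 0)
      + (if i = m ∧ j = M.d - 1 then 1 else 0) = M.entry i j
  by_cases hc : i = m ∧ j = M.d - 1
  · obtain ⟨rfl, rfl⟩ := hc
    rw [if_pos (⟨rfl, rfl⟩ : i = i ∧ M.d - 1 = M.d - 1)]
    have hx := hm_mem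
    omega
  · rw [if_neg hc]
    simp

lemma step_trunc (M : FMat)
    (htri : ∀ i j, (M.d ≤ i ∨ M.d ≤ j ∨ j < i) → M.entry i j = 0)
    (hdiag : ∀ i, i < M.d → 0 < M.entry i i)
    (hd2 : 2 ≤ M.d)
    (hbelow : ∀ i, i < M.d - 1 → M.entry i (M.d - 1) = 0)
    (hdd : M.entry (M.d - 1) (M.d - 1) = 1) :
    fStep ⟨M.d - 1, fun i j => if i < M.d - 1 ∧ j < M.d - 1 then M.entry i j else 0⟩ (M.d - 1)
      = M := by
  have hmem : (if M.d - 2 < M.d - 1 ∧ M.d - 2 < M.d - 1 then M.entry (M.d - 2) (M.d - 2) else 0) ≠ 0 := by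
    rw [if_pos ⟨by omega, by omega⟩]
    exact (hdiag (M.d - 2) (by omega)).ne'
  have hcond : ¬ (M.d - 1 ≤ mindex ⟨M.d - 1, fun i j =>
      if i < M.d - 1 ∧ j < M.d - 1 then M.entry i j else 0⟩) := by
    intro hcontra
    have hle : mindex ⟨M.d - 1, fun i j =>
        if i < M.d - 1 ∧ j < M.d - 1 then M.entry i j else 0⟩ ≤ M.d - 2 := by
      apply Nat.sInf_le
      show (if M.d - 2 < M.d - 1 ∧ (M.d - 1 - 1) < M.d - 1 then M.entry (M.d - 2) (M.d - 1 - 1) else 0) ≠ 0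
      rw [show M.d - 1 - 1 = M.d - 2 from rfl]
      exact hmem
    have h9 := le_trans hcontra hle
    clear hcontra hle hmem
    omega
  unfold fStep
  rw [if_neg hcond, if_pos rfl]
  show (⟨(M.d - 1) + 1, fun i j =>
      if i = M.d - 1 ∨ j = M.d - 1 then (if i = M.d - 1 ∧ j = M.d - 1 then 1 else 0)
      else if i < M.d - 1 ∧ j < M.d - 1 then M.entry i j else 0⟩ : FMat) = M
  refine FMat_ext _ _ (by show M.d - 1 + 1 = M.d; omega) ?_
  intro i j
  show (if i = M.d - 1 ∨ j = M.d - 1 then (if i = M.d - 1 ∧ j = M.d - 1 then 1 else 0)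
      else if i < M.d - 1 ∧ j < M.d - 1 then M.entry i j else 0) = M.entry i j
  by_cases h1 : i = M.d - 1 ∨ j = M.d - 1
  · rw [if_pos h1]
    by_cases h2 : i = M.d - 1 ∧ j = M.d - 1
    · obtain ⟨rfl, rfl⟩ := h2
      rw [if_pos ⟨rfl, rfl⟩, hdd]
    · rw [if_neg h2]
      by_cases hj : j = M.d - 1
      · subst hj
        rcases Nat.lt_or_ge i (M.d - 1) with hlt | hge
        · exact (hbelow i hlt).symm
        · have hi : i ≠ M.d - 1 := fun h => h2 ⟨h, rfl⟩
          exact (htri i _ (by omega)).symm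
      · have hi : i = M.d - 1 := by tauto
        subst hi
        exact (htri _ j (by omega)).symm
  · rw [if_neg h1]
    push_neg at h1
    by_cases h2 : i < M.d - 1 ∧ j < M.d - 1
    · rw [if_pos h2]
    · rw [if_neg h2]
      exact (htri i j (by omega)).symm

lemma selfModified_single : SelfModified [0] :=
  ⟨⟨rfl, fun _ hk hk0 => by simp at hk; omega⟩, fun _ hk hk0 => by simp at hk; omega⟩

lemma surj_aux : ∀ n : ℕ, ∀ M : FMat,
    (∀ i j, (M.d ≤ i ∨ M.d ≤ j ∨ j < i) → M.entry i j = 0) → entrySum M = n → 0 < n →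
    (∀ i, i < M.d → 0 < M.entry i i) →
    ∃ l, SelfModified l ∧ l.length = n ∧ fAM l = M := by
  intro n
  induction n using Nat.strong_induction_on with
  | _ n ih =>
    intro M htri hsum hn hdiag
    rcases Nat.lt_or_ge n 2 with h2 | h2
    · have hn1 : n = 1 := by omega
      subst hn1
      exact ⟨[0], selfModified_single, rfl, surj_base M htri hsum hdiag⟩
    · have hd0 : 0 < M.d := entrySum_pos_d M (by omega)
      have hdd : 0 < M.entry (M.d - 1) (M.d - 1) := hdiag _ (by omega)
      have hSne : Set.Nonempty {i | M.entry i (M.d - 1) ≠ 0} := ⟨M.d - 1, hdd.ne'⟩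
      obtain ⟨m, hm_mem, hm_below, hmono, hm_le⟩ :
          ∃ m, M.entry m (M.d - 1) ≠ 0 ∧ (∀ i, i < m → M.entry i (M.d - 1) = 0) ∧
            (∀ i, M.entry i (M.d - 1) ≠ 0 → m ≤ i) ∧ m ≤ M.d - 1 := by
        refine ⟨sInf {i | M.entry i (M.d - 1) ≠ 0}, Nat.sInf_mem hSne, ?_,
          fun i hi => Nat.sInf_le hi, Nat.sInf_le hdd.ne'⟩
        intro i hi
        by_contra hne
        have hmem2 : i ∈ {i | M.entry i (M.d - 1) ≠ 0} := hne
        have := Nat.sInf_le hmem2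
        omega
      by_cases hbase : m = M.d - 1 ∧ M.entry (M.d - 1) (M.d - 1) = 1
      · -- truncation case (AM2 inverse)
        have hd2 : 2 ≤ M.d := by
          by_contra hd1
          have hd1' : M.d = 1 := by omega
          have hs1 : entrySum M = M.entry 0 0 := by
            unfold entrySum; rw [hd1']; simp
          rw [hd1'] at hbase
          simp at hbase
          omega
        obtain ⟨D, hD⟩ : ∃ D, M.d = D + 1 := ⟨M.d - 1, by omega⟩
        have hDd : M.d - 1 = D := by omega
        have hbelow' : ∀ i, i < M.d - 1 → M.entry i (M.d - 1) = 0 := by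
          intro i hi; exact hm_below i (by omega)
        have key : entrySum M
            = (∑ i ∈ Finset.range D, ∑ j ∈ Finset.range D, M.entry i j) + 1 := by
          unfold entrySum
          rw [hD, Finset.sum_range_succ]
          rw [Finset.sum_congr rfl (fun i hi => by
            rw [Finset.sum_range_succ, show M.entry i D = 0 from by
              rw [← hDd]; exact hbelow' i (by rw [hDd]; exact Finset.mem_range.mp hi),
              add_zero] :
            ∀ i ∈ Finset.range D, ∑ j ∈ Finset.range (D+1), M.entry i j
              = ∑ j ∈ Finset.range D, M.entry i j)]
          rw [Finset.sum_range_succ,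
            Finset.sum_eq_zero (fun j hj => htri D j (by
              have := Finset.mem_range.mp hj; omega)),
            show M.entry D D = 1 from by rw [← hDd]; exact hbase.2]
        have hsum' : entrySum (⟨M.d - 1, fun i j =>
            if i < M.d - 1 ∧ j < M.d - 1 then M.entry i j else 0⟩ : FMat) = n - 1 := by
          show (∑ i ∈ Finset.range (M.d - 1), ∑ j ∈ Finset.range (M.d - 1),
            if i < M.d - 1 ∧ j < M.d - 1 then M.entry i j else 0) = n - 1
          rw [hDd]
          rw [Finset.sum_congr rfl (fun i hi => Finset.sum_congr rfl (fun j hj =>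
            if_pos ⟨Finset.mem_range.mp hi, Finset.mem_range.mp hj⟩))]
          have h4 : (∑ i ∈ Finset.range D, ∑ j ∈ Finset.range D, M.entry i j) + 1 = n := by
            rw [← key]
            exact hsum
          exact Nat.eq_sub_of_add_eq h4
        have htri' : ∀ i j, ((⟨M.d - 1, fun i j =>
            if i < M.d - 1 ∧ j < M.d - 1 then M.entry i j else 0⟩ : FMat).d ≤ i ∨
            (M.d - 1) ≤ j ∨ j < i) →
            (if i < M.d - 1 ∧ j < M.d - 1 then M.entry i j else 0) = 0 := by
          intro i j hij
          by_cases hc : i < M.d - 1 ∧ j < M.d - 1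
          · rw [if_pos hc]
            refine htri i j ?_
            rcases hij with h | h | h
            · exact absurd h (by show ¬ (M.d - 1 ≤ i); omega)
            · omega
            · omega
          · rw [if_neg hc]
        have hdiag' : ∀ i, i < (⟨M.d - 1, fun i j =>
            if i < M.d - 1 ∧ j < M.d - 1 then M.entry i j else 0⟩ : FMat).d →
            0 < (if i < M.d - 1 ∧ i < M.d - 1 then M.entry i i else 0) := by
          intro i hi
          have hi' : i < M.d - 1 := hi
          rw [if_pos ⟨hi', hi'⟩]
          exact hdiag i (by omega)
        obtain ⟨l', hsm', hlen', hfam'⟩ := ih (n-1) (by omega) _ htri' hsum' (by omega) hdiag'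
        have hl' : l' ≠ [] := by
          intro h; rw [h] at hlen'; simp at hlen'; omega
        have hInv' := main_inv l' hsm' hl'
        rw [hfam'] at hInv'
        obtain ⟨hd', _, _, _, _, _, _⟩ := hInv'
        have ha' : M.d - 1 = ascents l' + 1 := hd'
        refine ⟨l' ++ [M.d - 1], ?_, ?_, ?_⟩
        · rw [selfModified_append_iff l' _ hl']
          exact ⟨hsm', Or.inr ha'⟩
        · rw [List.length_append, hlen']; simp; omega
        · rw [fAM_append l' _ hl', hfam']
          exact step_trunc M htri hdiag hd2 hbelow' (hbase.1 ▸ hbase.2)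
      · -- decrement case (AM1 inverse)
        have hne2 : m < M.d - 1 ∨ 2 ≤ M.entry (M.d - 1) (M.d - 1) := by
          rcases Nat.lt_or_ge m (M.d - 1) with h | h
          · exact Or.inl h
          · have hmeq : m = M.d - 1 := by omega
            right
            rcases Nat.lt_or_ge (M.entry (M.d-1) (M.d-1)) 2 with hlt | hge
            · exact absurd ⟨hmeq, by omega⟩ hbase
            · exact hge
        have hpt : ∀ i j, M.entry i j
            = (M.entry i j - (if i = m ∧ j = M.d - 1 then 1 else 0))
              + (if i = m ∧ j = M.d - 1 then 1 else 0) := by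
          intro i j
          by_cases hc : i = m ∧ j = M.d - 1
          · obtain ⟨rfl, rfl⟩ := hc
            rw [if_pos ⟨rfl, rfl⟩]
            omega
          · rw [if_neg hc]
            omega
        have hδ : ∀ i, (∑ j ∈ Finset.range M.d, (if i = m ∧ j = M.d - 1 then 1 else 0))
            = if i = m then 1 else 0 := by
          intro i
          by_cases him : i = m
          · simp only [him, true_and]
            rw [Finset.sum_ite_eq' (Finset.range M.d) (M.d - 1) (fun _ => 1),
              if_pos (Finset.mem_range.mpr (by omega))]
            simp
          · simp [him]
        have key : entrySum (⟨M.d, fun i j =>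
            M.entry i j - if i = m ∧ j = M.d - 1 then 1 else 0⟩ : FMat) + 1 = entrySum M := by
          show (∑ i ∈ Finset.range M.d, ∑ j ∈ Finset.range M.d,
              (M.entry i j - if i = m ∧ j = M.d - 1 then 1 else 0)) + 1
            = ∑ i ∈ Finset.range M.d, ∑ j ∈ Finset.range M.d, M.entry i j
          rw [Finset.sum_congr rfl (fun i (hi : i ∈ Finset.range M.d) => by
            rw [← hδ i, ← Finset.sum_add_distrib]
            exact Finset.sum_congr rfl (fun j _ => hpt i j) :
            ∀ i ∈ Finset.range M.d, ∑ j ∈ Finset.range M.d, M.entry i j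
              = (∑ j ∈ Finset.range M.d,
                  (M.entry i j - if i = m ∧ j = M.d - 1 then 1 else 0))
                + (if i = m then 1 else 0))]
          rw [Finset.sum_add_distrib]
          rw [Finset.sum_ite_eq' (Finset.range M.d) m (fun _ => 1),
            if_pos (Finset.mem_range.mpr (by omega))]
        have htri' : ∀ i j, ((⟨M.d, fun i j =>
            M.entry i j - if i = m ∧ j = M.d - 1 then 1 else 0⟩ : FMat).d ≤ i ∨
            M.d ≤ j ∨ j < i) →
            (M.entry i j - if i = m ∧ j = M.d - 1 then 1 else 0) = 0 := by
          intro i j hij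
          have : M.entry i j = 0 := htri i j hij
          omega
        have hdiag' : ∀ i, i < (⟨M.d, fun i j =>
            M.entry i j - if i = m ∧ j = M.d - 1 then 1 else 0⟩ : FMat).d →
            0 < M.entry i i - (if i = m ∧ i = M.d - 1 then 1 else 0) := by
          intro i hi
          have hi' : i < M.d := hi
          by_cases hc : i = m ∧ i = M.d - 1
          · obtain ⟨rfl, hc2⟩ := hc
            rw [if_pos ⟨rfl, hc2⟩]
            have : 2 ≤ M.entry (M.d - 1) (M.d - 1) := by
              rcases hne2 with h | h
              · omega
              · exact h
            rw [hc2]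
            omega
          · rw [if_neg hc]
            have := hdiag i hi'
            omega
        have hsum' : entrySum (⟨M.d, fun i j =>
            M.entry i j - if i = m ∧ j = M.d - 1 then 1 else 0⟩ : FMat) = n - 1 := by
          omega
        obtain ⟨l', hsm', hlen', hfam'⟩ := ih (n-1) (by omega) _ htri'
          hsum' (by omega) hdiag'
        have hl' : l' ≠ [] := by
          intro h; rw [h] at hlen'; simp at hlen'; omega
        have hInv' := main_inv l' hsm' hl'
        rw [hfam'] at hInv'
        obtain ⟨hd', _, _, _, hne', _, _⟩ := hInv'
        have hlast_ne : M.entry (lastD l') (M.d - 1) ≠ 0 := by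
          intro h
          apply hne'
          show M.entry (lastD l') (M.d - 1)
            - (if lastD l' = m ∧ M.d - 1 = M.d - 1 then 1 else 0) = 0
          rw [h]
          simp
        have hmle : m ≤ lastD l' := hmono _ hlast_ne
        refine ⟨l' ++ [m], ?_, ?_, ?_⟩
        · rw [selfModified_append_iff l' _ hl']
          refine ⟨hsm', Or.inl ?_⟩
          rw [lastD_eq_getLast l' hl']
          exact hmle
        · rw [List.length_append, hlen']; simp; omega
        · rw [fAM_append l' _ hl', hfam']
          refine step_dec M m hm_mem hmono ⟨M.d - 1, ?_⟩
          rcases hne2 with h | h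
          · rw [if_neg (by omega)]
            omega
          · by_cases hc : M.d - 1 = m
            · rw [if_pos hc]; omega
            · rw [if_neg hc]; omega

theorem fAM_bijOn_selfModified (n : ℕ) (hn : 0 < n) :
    Set.BijOn fAM {l : List ℕ | SelfModified l ∧ l.length = n}
      {M : FMat | IsFishburn M ∧ entrySum M = n ∧ ∀ i, i < M.d → 0 < M.entry i i} := by
  refine ⟨?_, ?_, ?_⟩
  · rintro l ⟨hsm, hlen⟩
    have hl : l ≠ [] := by intro h; rw [h] at hlen; simp at hlen; omega
    obtain ⟨hF, hsum, hdiag, _⟩ := forward_dir l hsm hl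
    exact ⟨hF, by rw [hsum, hlen], hdiag⟩
  · rintro l1 ⟨hsm1, hlen1⟩ l2 ⟨hsm2, hlen2⟩ heq
    have hl1 : l1 ≠ [] := by intro h; rw [h] at hlen1; simp at hlen1; omega
    have hl2 : l2 ≠ [] := by intro h; rw [h] at hlen2; simp at hlen2; omega
    have h1 := (forward_dir l1 hsm1 hl1).2.2.2
    have h2 := (forward_dir l2 hsm2 hl2).2.2.2
    rw [← h1, ← h2, heq]
  · rintro M ⟨hF, hsum, hdiag⟩
    obtain ⟨l, hsm, hlen, hfam⟩ := surj_aux n M hF.1 hsum hn hdiag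
    exact ⟨l, ⟨hsm, hlen⟩, hfam⟩
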